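/- Let σ ∈ {naive, stb, stage, pref, sem}, let 𝕊 be an extension-set, and let F be any σ-compact AF with σ(F) = 𝕊. Then the component-structure K(F) equals K(𝕊); equivalently, two arguments a,b ∈ Arg_𝕊 lie in the same weakly connected component of F if and only if (a,b) belongs to the reflexive-transitive closure of the relation (Arg_𝕊 × Arg_𝕊) ∖ Pairs_𝕊. -/

import Mathlib

structure AF where
  A : Finset ℕ
  R : Set (ℕ × ℕ)
  R_sub : ∀ p ∈ R, p.1 ∈ A ∧ p.2 ∈ A

namespace AF

def cf (F : AF) : Set (Set ℕ) :=
  {S | S ⊆ ↑F.A ∧ ∀ a ∈ S, ∀ b ∈ S, (a, b) ∉ F.R}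

def defends (F : AF) (S : Set ℕ) (a : ℕ) : Prop :=
  ∀ b, (b, a) ∈ F.R → ∃ s ∈ S, (s, b) ∈ F.R

def adm (F : AF) : Set (Set ℕ) :=
  {S | S ∈ F.cf ∧ ∀ a ∈ S, F.defends S a}

def rng (F : AF) (S : Set ℕ) : Set ℕ :=
  S ∪ {b | ∃ s ∈ S, (s, b) ∈ F.R}

def naive (F : AF) : Set (Set ℕ) :=
  {S | S ∈ F.cf ∧ ∀ T ∈ F.cf, S ⊆ T → S = T}

def stb (F : AF) : Set (Set ℕ) :=
  {S | S ∈ F.cf ∧ ∀ a ∈ F.A, a ∉ S → ∃ s ∈ S, (s, a) ∈ F.R}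

def pref (F : AF) : Set (Set ℕ) :=
  {S | S ∈ F.adm ∧ ∀ T ∈ F.adm, S ⊆ T → S = T}

def stage (F : AF) : Set (Set ℕ) :=
  {S | S ∈ F.cf ∧ ¬ ∃ T ∈ F.cf, F.rng S ⊂ F.rng T}

def sem (F : AF) : Set (Set ℕ) :=
  {S | S ∈ F.adm ∧ ¬ ∃ T ∈ F.adm, F.rng S ⊂ F.rng T}

end AF

abbrev Semantics := AF → Set (Set ℕ)

def StandardSemantics : Set Semantics :=
  {AF.naive, AF.stb, AF.stage, AF.pref, AF.sem}

def AFCompact (σ : Semantics) (F : AF) : Prop :=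
  ∀ a ∈ F.A, ∃ S ∈ σ F, a ∈ S

def CAF (σ : Semantics) : Set AF := {F | AFCompact σ F}

def ArgS (𝕊 : Set (Set ℕ)) : Set ℕ := ⋃₀ 𝕊

def PairsS (𝕊 : Set (Set ℕ)) : Set (ℕ × ℕ) :=
  {p | ∃ S ∈ 𝕊, p.1 ∈ S ∧ p.2 ∈ S}

def IsExtensionSet (𝕊 : Set (Set ℕ)) : Prop := (ArgS 𝕊).Finite

def AFStep (F : AF) (a b : ℕ) : Prop := (a, b) ∈ F.R ∨ (b, a) ∈ F.R

def AFConnected (F : AF) : Prop :=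
  ∀ a ∈ F.A, ∀ b ∈ F.A, Relation.ReflTransGen (AFStep F) a b

def sameComp (F : AF) (a b : ℕ) : Prop := Relation.ReflTransGen (AFStep F) a b

def comps (F : AF) : Set (Set ℕ) :=
  {K | ∃ a ∈ F.A, K = {b ∈ (↑F.A : Set ℕ) | sameComp F a b}}

def nopairs (𝕊 : Set (Set ℕ)) (a b : ℕ) : Prop :=
  a ∈ ArgS 𝕊 ∧ b ∈ ArgS 𝕊 ∧ (a, b) ∉ PairsS 𝕊

def compsS (𝕊 : Set (Set ℕ)) : Set (Set ℕ) :=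
  {K | ∃ a ∈ ArgS 𝕊, K = {b ∈ ArgS 𝕊 | Relation.ReflTransGen (nopairs 𝕊) a b}}

noncomputable def sigmaMax (σ : Semantics) (n : ℕ) : ℕ :=
  sSup {k | ∃ F : AF, F.A.card = n ∧ (σ F).ncard = k}

noncomputable def sigmaMaxCon (σ : Semantics) (n : ℕ) : ℕ :=
  sSup {k | ∃ F : AF, F.A.card = n ∧ AFConnected F ∧ (σ F).ncard = k}

noncomputable def sigmaMax2 (σ : Semantics) (n : ℕ) : ℕ :=
  sSup ({k | ∃ F : AF, F.A.card = n ∧ (σ F).ncard = k} \ {sigmaMax σ n})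

def cfSet (𝕊 : Set (Set ℕ)) : Set (Set ℕ) :=
  {S | S ⊆ ArgS 𝕊 ∧ ∀ a ∈ S, ∀ b ∈ S, (a, b) ∈ PairsS 𝕊}

def plusSet (𝕊 : Set (Set ℕ)) : Set (Set ℕ) :=
  {S | S ∈ cfSet 𝕊 ∧ ∀ T ∈ cfSet 𝕊, S ⊆ T → S = T}

def minusSet (𝕊 : Set (Set ℕ)) : Set (Set ℕ) := plusSet 𝕊 \ 𝕊

def Sig (σ : Semantics) : Set (Set (Set ℕ)) := {𝕊 | ∃ F : AF, σ F = 𝕊}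

def cSig (σ : Semantics) : Set (Set (Set ℕ)) :=
  {𝕊 | ∃ F : AF, AFCompact σ F ∧ σ F = 𝕊}

def Pcon (σ : Semantics) (n : ℕ) : Set ℕ :=
  {k | ∃ F : AF, AFCompact σ F ∧ AFConnected F ∧ F.A.card = n ∧ (σ F).ncard = k}

open Classical in
noncomputable def restrictAF (F : AF) (K : Set ℕ) : AF where
  A := F.A.filter (fun a => a ∈ K)
  R := {p | p ∈ F.R ∧ p.1 ∈ K ∧ p.2 ∈ K}
  R_sub := fun p hp => by
    have h := F.R_sub p hp.1
    simp only [Finset.mem_filter]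
    exact ⟨⟨h.1, hp.2.1⟩, ⟨h.2, hp.2.2⟩⟩

def IsExclusionMapping (𝕊 : Set (Set ℕ)) (Rm : Set (ℕ × ℕ)) : Prop :=
  ∃ f : Set ℕ → ℕ,
    (∀ S ∈ minusSet 𝕊, f S ∈ ArgS 𝕊 ∧ f S ∉ S) ∧
    Rm = {p | ∃ S ∈ minusSet 𝕊, p.1 ∈ S ∧ p.2 = f S ∧ p ∉ PairsS 𝕊}

def Independent (𝕊 : Set (Set ℕ)) : Prop :=
  ∃ Rm : Set (ℕ × ℕ), IsExclusionMapping 𝕊 Rm ∧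
    (∀ a b, (a, b) ∈ Rm → (b, a) ∈ Rm → a = b) ∧
    ∀ S ∈ 𝕊, ∀ a ∈ ArgS 𝕊 \ S, ∃ s ∈ S, (s, a) ∉ Rm ∪ PairsS 𝕊

def ConflictExplicit (σ : Semantics) (F : AF) : Prop :=
  ∀ a ∈ F.A, ∀ b ∈ F.A, (a, b) ∉ PairsS (σ F) → (a, b) ∈ F.R ∨ (b, a) ∈ F.R

noncomputable def canonicalCF (𝕊 : Set (Set ℕ)) (h : IsExtensionSet 𝕊) : AF where
  A := h.toFinset
  R := {p | p.1 ∈ ArgS 𝕊 ∧ p.2 ∈ ArgS 𝕊 ∧ p ∉ PairsS 𝕊}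
  R_sub := fun p hp => by
    exact ⟨h.mem_toFinset.2 hp.1, h.mem_toFinset.2 hp.2.1⟩
section Aux

open Relation

variable {F : AF} {C : Set ℕ}

/-- Combination of two sets along a component set `C`. -/
def combineC (C S T : Set ℕ) : Set ℕ := (S ∩ C) ∪ (T \ C)

lemma combineC_mem_left {S T : Set ℕ} {a : ℕ} (ha : a ∈ S) (haC : a ∈ C) :
    a ∈ combineC C S T := Or.inl ⟨ha, haC⟩

lemma combineC_mem_right {S T : Set ℕ} {b : ℕ} (hb : b ∈ T) (hbC : b ∉ C) :
    b ∈ combineC C S T := Or.inr ⟨hb, hbC⟩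

/-- `C` is closed under edges of `F`. -/
def ClosedC (F : AF) (C : Set ℕ) : Prop := ∀ x y, (x, y) ∈ F.R → (x ∈ C ↔ y ∈ C)

lemma cf_combineC (hC : ClosedC F C) {S T : Set ℕ} (hS : S ∈ F.cf) (hT : T ∈ F.cf) :
    combineC C S T ∈ F.cf := by
  constructor
  · rintro x (⟨h, _⟩ | ⟨h, _⟩)
    exacts [hS.1 h, hT.1 h]
  · rintro x hx y hy hxy
    rcases hx with ⟨hxS, hxC⟩ | ⟨hxT, hxC⟩ <;> rcases hy with ⟨hyS, hyC⟩ | ⟨hyT, hyC⟩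
    · exact hS.2 x hxS y hyS hxy
    · exact hyC ((hC x y hxy).1 hxC)
    · exact hxC ((hC x y hxy).2 hyC)
    · exact hT.2 x hxT y hyT hxy

lemma adm_combineC (hC : ClosedC F C) {S T : Set ℕ} (hS : S ∈ F.adm) (hT : T ∈ F.adm) :
    combineC C S T ∈ F.adm := by
  refine ⟨cf_combineC hC hS.1 hT.1, ?_⟩
  rintro x hx b hb
  rcases hx with ⟨hxS, hxC⟩ | ⟨hxT, hxC⟩
  · obtain ⟨s, hs, hsb⟩ := hS.2 x hxS b hb
    have hbC : b ∈ C := (hC b x hb).2 hxC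
    exact ⟨s, combineC_mem_left hs ((hC s b hsb).2 hbC), hsb⟩
  · obtain ⟨s, hs, hsb⟩ := hT.2 x hxT b hb
    have hbC : b ∉ C := fun h => hxC ((hC b x hb).1 h)
    exact ⟨s, combineC_mem_right hs (fun h => hbC ((hC s b hsb).1 h)), hsb⟩

lemma rng_combineC (hC : ClosedC F C) {S T : Set ℕ} :
    F.rng (combineC C S T) = (F.rng S ∩ C) ∪ (F.rng T \ C) := by
  ext z
  constructor
  · rintro (hz | ⟨s, hs, hsz⟩)
    · rcases hz with ⟨h, hc⟩ | ⟨h, hc⟩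
      · exact Or.inl ⟨Or.inl h, hc⟩
      · exact Or.inr ⟨Or.inl h, hc⟩
    · rcases hs with ⟨hsS, hsC⟩ | ⟨hsT, hsC⟩
      · exact Or.inl ⟨Or.inr ⟨s, hsS, hsz⟩, (hC s z hsz).1 hsC⟩
      · exact Or.inr ⟨Or.inr ⟨s, hsT, hsz⟩, fun h => hsC ((hC s z hsz).2 h)⟩
  · rintro (⟨hz, hc⟩ | ⟨hz, hc⟩)
    · rcases hz with h | ⟨s, hs, hsz⟩
      · exact Or.inl (Or.inl ⟨h, hc⟩)
      · exact Or.inr ⟨s, Or.inl ⟨hs, (hC s z hsz).2 hc⟩, hsz⟩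
    · rcases hz with h | ⟨s, hs, hsz⟩
      · exact Or.inl (Or.inr ⟨h, hc⟩)
      · exact Or.inr ⟨s, Or.inr ⟨hs, fun hsC => hc ((hC s z hsz).1 hsC)⟩, hsz⟩

lemma subset_combineC {V S : Set ℕ} (h : S ∩ C ⊆ V) : S ⊆ combineC C V S := by
  intro x hx
  by_cases hc : x ∈ C
  · exact Or.inl ⟨h ⟨hx, hc⟩, hc⟩
  · exact Or.inr ⟨hx, hc⟩

lemma subset_combineC' {V T : Set ℕ} (h : T \ C ⊆ V) : T ⊆ combineC C T V := by
  intro x hx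
  by_cases hc : x ∈ C
  · exact Or.inl ⟨hx, hc⟩
  · exact Or.inr ⟨h ⟨hx, hc⟩, hc⟩

lemma pair_naive (hC : ClosedC F C) {a b : ℕ} {S T : Set ℕ}
    (haC : a ∈ C) (hbC : b ∉ C) (hS : S ∈ F.naive) (haS : a ∈ S)
    (hT : T ∈ F.naive) (hbT : b ∈ T) : ∃ U ∈ F.naive, a ∈ U ∧ b ∈ U := by
  refine ⟨combineC C S T, ⟨cf_combineC hC hS.1 hT.1, ?_⟩,
    combineC_mem_left haS haC, combineC_mem_right hbT hbC⟩
  intro V hV hUV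
  refine Set.Subset.antisymm hUV (fun x hx => ?_)
  by_cases hc : x ∈ C
  · have h1 : S ⊆ combineC C V S := subset_combineC (fun y hy => hUV (Or.inl hy))
    have h2 := hS.2 (combineC C V S) (cf_combineC hC hV hS.1) h1
    have hxS : x ∈ S := by rw [h2]; exact Or.inl ⟨hx, hc⟩
    exact Or.inl ⟨hxS, hc⟩
  · have h1 : T ⊆ combineC C T V := subset_combineC' (fun y hy => hUV (Or.inr hy))
    have h2 := hT.2 (combineC C T V) (cf_combineC hC hT.1 hV) h1
    have hxT : x ∈ T := by rw [h2]; exact Or.inr ⟨hx, hc⟩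
    exact Or.inr ⟨hxT, hc⟩

lemma pair_pref (hC : ClosedC F C) {a b : ℕ} {S T : Set ℕ}
    (haC : a ∈ C) (hbC : b ∉ C) (hS : S ∈ F.pref) (haS : a ∈ S)
    (hT : T ∈ F.pref) (hbT : b ∈ T) : ∃ U ∈ F.pref, a ∈ U ∧ b ∈ U := by
  refine ⟨combineC C S T, ⟨adm_combineC hC hS.1 hT.1, ?_⟩,
    combineC_mem_left haS haC, combineC_mem_right hbT hbC⟩
  intro V hV hUV
  refine Set.Subset.antisymm hUV (fun x hx => ?_)
  by_cases hc : x ∈ C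
  · have h1 : S ⊆ combineC C V S := subset_combineC (fun y hy => hUV (Or.inl hy))
    have h2 := hS.2 (combineC C V S) (adm_combineC hC hV hS.1) h1
    have hxS : x ∈ S := by rw [h2]; exact Or.inl ⟨hx, hc⟩
    exact Or.inl ⟨hxS, hc⟩
  · have h1 : T ⊆ combineC C T V := subset_combineC' (fun y hy => hUV (Or.inr hy))
    have h2 := hT.2 (combineC C T V) (adm_combineC hC hT.1 hV) h1
    have hxT : x ∈ T := by rw [h2]; exact Or.inr ⟨hx, hc⟩
    exact Or.inr ⟨hxT, hc⟩

lemma pair_stb (hC : ClosedC F C) {a b : ℕ} {S T : Set ℕ}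
    (haC : a ∈ C) (hbC : b ∉ C) (hS : S ∈ F.stb) (haS : a ∈ S)
    (hT : T ∈ F.stb) (hbT : b ∈ T) : ∃ U ∈ F.stb, a ∈ U ∧ b ∈ U := by
  refine ⟨combineC C S T, ⟨cf_combineC hC hS.1 hT.1, ?_⟩,
    combineC_mem_left haS haC, combineC_mem_right hbT hbC⟩
  intro x hxA hxU
  by_cases hc : x ∈ C
  · have hxS : x ∉ S := fun h => hxU (Or.inl ⟨h, hc⟩)
    obtain ⟨s, hs, hsx⟩ := hS.2 x hxA hxS
    exact ⟨s, Or.inl ⟨hs, (hC s x hsx).2 hc⟩, hsx⟩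
  · have hxT : x ∉ T := fun h => hxU (Or.inr ⟨h, hc⟩)
    obtain ⟨t, ht, htx⟩ := hT.2 x hxA hxT
    exact ⟨t, Or.inr ⟨ht, fun h => hc ((hC t x htx).1 h)⟩, htx⟩

lemma pair_stage (hC : ClosedC F C) {a b : ℕ} {S T : Set ℕ}
    (haC : a ∈ C) (hbC : b ∉ C) (hS : S ∈ F.stage) (haS : a ∈ S)
    (hT : T ∈ F.stage) (hbT : b ∈ T) : ∃ U ∈ F.stage, a ∈ U ∧ b ∈ U := by
  refine ⟨combineC C S T, ⟨cf_combineC hC hS.1 hT.1, ?_⟩,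
    combineC_mem_left haS haC, combineC_mem_right hbT hbC⟩
  rintro ⟨V, hV, hlt⟩
  rw [Set.ssubset_def] at hlt
  obtain ⟨h1, h2⟩ := hlt
  obtain ⟨z, hzV, hzU⟩ := Set.not_subset.mp h2
  rw [rng_combineC hC] at h1 hzU
  by_cases hc : z ∈ C
  · refine hS.2 ⟨combineC C V S, cf_combineC hC hV hS.1, ?_⟩
    rw [rng_combineC hC, Set.ssubset_def]
    constructor
    · intro x hx
      by_cases hxc : x ∈ C
      · exact Or.inl ⟨h1 (Or.inl ⟨hx, hxc⟩), hxc⟩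
      · exact Or.inr ⟨hx, hxc⟩
    · intro hcon
      exact hzU (Or.inl ⟨hcon (Or.inl ⟨hzV, hc⟩), hc⟩)
  · refine hT.2 ⟨combineC C T V, cf_combineC hC hT.1 hV, ?_⟩
    rw [rng_combineC hC, Set.ssubset_def]
    constructor
    · intro x hx
      by_cases hxc : x ∈ C
      · exact Or.inl ⟨hx, hxc⟩
      · exact Or.inr ⟨h1 (Or.inr ⟨hx, hxc⟩), hxc⟩
    · intro hcon
      exact hzU (Or.inr ⟨hcon (Or.inr ⟨hzV, hc⟩), hc⟩)

lemma pair_sem (hC : ClosedC F C) {a b : ℕ} {S T : Set ℕ}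
    (haC : a ∈ C) (hbC : b ∉ C) (hS : S ∈ F.sem) (haS : a ∈ S)
    (hT : T ∈ F.sem) (hbT : b ∈ T) : ∃ U ∈ F.sem, a ∈ U ∧ b ∈ U := by
  refine ⟨combineC C S T, ⟨adm_combineC hC hS.1 hT.1, ?_⟩,
    combineC_mem_left haS haC, combineC_mem_right hbT hbC⟩
  rintro ⟨V, hV, hlt⟩
  rw [Set.ssubset_def] at hlt
  obtain ⟨h1, h2⟩ := hlt
  obtain ⟨z, hzV, hzU⟩ := Set.not_subset.mp h2
  rw [rng_combineC hC] at h1 hzU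
  by_cases hc : z ∈ C
  · refine hS.2 ⟨combineC C V S, adm_combineC hC hV hS.1, ?_⟩
    rw [rng_combineC hC, Set.ssubset_def]
    constructor
    · intro x hx
      by_cases hxc : x ∈ C
      · exact Or.inl ⟨h1 (Or.inl ⟨hx, hxc⟩), hxc⟩
      · exact Or.inr ⟨hx, hxc⟩
    · intro hcon
      exact hzU (Or.inl ⟨hcon (Or.inl ⟨hzV, hc⟩), hc⟩)
  · refine hT.2 ⟨combineC C T V, adm_combineC hC hT.1 hV, ?_⟩
    rw [rng_combineC hC, Set.ssubset_def]
    constructor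
    · intro x hx
      by_cases hxc : x ∈ C
      · exact Or.inl ⟨hx, hxc⟩
      · exact Or.inr ⟨h1 (Or.inr ⟨hx, hxc⟩), hxc⟩
    · intro hcon
      exact hzU (Or.inr ⟨hcon (Or.inr ⟨hzV, hc⟩), hc⟩)

lemma std_cf {σ : Semantics} (hσ : σ ∈ StandardSemantics) {F : AF} {S : Set ℕ}
    (hS : S ∈ σ F) : S ∈ F.cf := by
  simp only [StandardSemantics, Set.mem_insert_iff, Set.mem_singleton_iff] at hσ
  rcases hσ with h | h | h | h | h <;> subst h
  exacts [hS.1, hS.1, hS.1, hS.1.1, hS.1.1]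

lemma pair_std {σ : Semantics} (hσ : σ ∈ StandardSemantics) {F : AF} {a b : ℕ}
    (hnc : ¬ sameComp F a b) {S T : Set ℕ}
    (hS : S ∈ σ F) (haS : a ∈ S) (hT : T ∈ σ F) (hbT : b ∈ T) :
    ∃ U ∈ σ F, a ∈ U ∧ b ∈ U := by
  have hC : ClosedC F {x | sameComp F a x} := by
    intro x y hxy
    exact ⟨fun h => h.tail (Or.inl hxy), fun h => h.tail (Or.inr hxy)⟩
  have haC : a ∈ {x | sameComp F a x} := ReflTransGen.refl
  have hbC : b ∉ {x | sameComp F a x} := hnc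
  simp only [StandardSemantics, Set.mem_insert_iff, Set.mem_singleton_iff] at hσ
  rcases hσ with h | h | h | h | h <;> subst h
  exacts [pair_naive hC haC hbC hS haS hT hbT,
    pair_stb hC haC hbC hS haS hT hbT,
    pair_stage hC haC hbC hS haS hT hbT,
    pair_pref hC haC hbC hS haS hT hbT,
    pair_sem hC haC hbC hS haS hT hbT]

end Aux

theorem compact_component_structure (σ : Semantics) (hσ : σ ∈ StandardSemantics)
    (𝕊 : Set (Set ℕ)) (hext : IsExtensionSet 𝕊)
    (F : AF) (hcomp : AFCompact σ F) (hσF : σ F = 𝕊) :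
    comps F = compsS 𝕊 ∧
    ∀ a ∈ ArgS 𝕊, ∀ b ∈ ArgS 𝕊,
      (sameComp F a b ↔ Relation.ReflTransGen (nopairs 𝕊) a b) := by
  subst hσF
  have hA : ArgS (σ F) = ↑F.A := by
    apply Set.Subset.antisymm
    · rintro x ⟨S, hS, hx⟩
      exact (std_cf hσ hS).1 hx
    · intro x hx
      obtain ⟨S, hS, hxS⟩ := hcomp x hx
      exact ⟨S, hS, hxS⟩
  have fwd : ∀ a, a ∈ ArgS (σ F) → ∀ b, sameComp F a b →
      Relation.ReflTransGen (nopairs (σ F)) a b := by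
    intro a ha b h
    induction h with
    | refl => exact Relation.ReflTransGen.refl
    | @tail c d h1 h2 ih =>
      have hcA : c ∈ F.A := by
        rcases h2 with h | h
        exacts [(F.R_sub _ h).1, (F.R_sub _ h).2]
      have hdA : d ∈ F.A := by
        rcases h2 with h | h
        exacts [(F.R_sub _ h).2, (F.R_sub _ h).1]
      have hnp : nopairs (σ F) c d := by
        refine ⟨by rw [hA]; exact hcA, by rw [hA]; exact hdA, ?_⟩
        rintro ⟨S, hS, hcS, hdS⟩
        rcases h2 with h | h
        · exact (std_cf hσ hS).2 c hcS d hdS h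
        · exact (std_cf hσ hS).2 d hdS c hcS h
      exact Relation.ReflTransGen.tail ih hnp
  have bwd : ∀ a b, Relation.ReflTransGen (nopairs (σ F)) a b → sameComp F a b := by
    intro a b h
    induction h with
    | refl => exact Relation.ReflTransGen.refl
    | @tail c d h1 h2 ih =>
      have step : sameComp F c d := by
        by_contra hnc
        obtain ⟨S, hS, hcS⟩ := h2.1
        obtain ⟨T, hT, hdT⟩ := h2.2.1
        obtain ⟨U, hU, hcU, hdU⟩ := pair_std hσ hnc hS hcS hT hdT
        exact h2.2.2 ⟨U, hU, hcU, hdU⟩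
      exact Relation.ReflTransGen.trans ih step
  have hsets : ∀ a ∈ F.A,
      {b ∈ (↑F.A : Set ℕ) | sameComp F a b} =
      {b ∈ ArgS (σ F) | Relation.ReflTransGen (nopairs (σ F)) a b} := by
    intro a haA
    have ha : a ∈ ArgS (σ F) := by rw [hA]; exact haA
    ext b
    simp only [Set.mem_setOf_eq]
    rw [hA]
    exact and_congr_right fun _ => ⟨fun h => fwd a ha b h, fun h => bwd a b h⟩
  constructor
  · ext K
    constructor
    · rintro ⟨a, haA, rfl⟩
      exact ⟨a, by rw [hA]; exact haA, hsets a haA⟩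
    · rintro ⟨a, ha, rfl⟩
      have haA : a ∈ F.A := by rw [hA] at ha; exact ha
      exact ⟨a, haA, (hsets a haA).symm⟩
  · intro a ha b hb
    exact ⟨fun h => fwd a ha b h, fun h => bwd a b h⟩
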